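/- For s > 0, ξ₀(s) = ∫₀¹ ((1−x)/(1+x))·s·x^{s−1} dx can be expressed via Laplace transforms: ξ₀(s) = ∫₀^∞ (2e^{−t}/(1+e^{−t})²)·e^{−st} dt, 1 − ξ₀(s) = s·∫₀^∞ (2e^{−t}/(1+e^{−t}))·e^{−st} dt, and ξ₀′(s) = −∫₀^∞ (2te^{−t}/(1+e^{−t})²)·e^{−st} dt. -/

import Mathlib

open MeasureTheory Real Set Filter

noncomputable def ξ₀ (s : ℝ) : ℝ :=
  ∫ x in (0:ℝ)..1, ((1 - x) / (1 + x)) * (s * x ^ (s - 1))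

noncomputable def ξ₀' (s : ℝ) : ℝ :=
  ∫ x in (0:ℝ)..1, 2 * x ^ s * Real.log x / (1 + x) ^ 2

private lemma exp_neg_hasDerivAt (t : ℝ) :
    HasDerivAt (fun t : ℝ => Real.exp (-t)) (-Real.exp (-t)) t := by
  simpa using (hasDerivAt_neg t).exp

private lemma exp_neg_mul_hasDerivAt (s t : ℝ) :
    HasDerivAt (fun t : ℝ => Real.exp (-s * t)) (-s * Real.exp (-s * t)) t := by
  simpa [mul_comm] using ((hasDerivAt_id t).const_mul (-s)).exp

/-- Substitution `x = e^{-t}` turning `(0,1)` integrals into `(0,∞)` integrals. -/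
private lemma integral_Ioo_eq_exp_neg (g : ℝ → ℝ) :
    ∫ x in Set.Ioo (0:ℝ) 1, g x
      = ∫ t in Set.Ioi (0:ℝ), Real.exp (-t) * g (Real.exp (-t)) := by
  have himg : (fun t : ℝ => Real.exp (-t)) '' Set.Ioi 0 = Set.Ioo 0 1 := by
    ext x
    constructor
    · rintro ⟨t, ht, rfl⟩
      exact ⟨Real.exp_pos _, Real.exp_lt_one_iff.mpr (by simpa using (mem_Ioi.mp ht))⟩
    · rintro ⟨hx0, hx1⟩
      exact ⟨-Real.log x, by simpa using Real.log_neg hx0 hx1, by simp [Real.exp_log hx0]⟩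
  rw [← himg, integral_image_eq_integral_abs_deriv_smul measurableSet_Ioi
      (fun t _ => (exp_neg_hasDerivAt t).hasDerivWithinAt)
      (fun a _ b _ h => neg_injective (Real.exp_injective h)) g]
  refine setIntegral_congr_fun measurableSet_Ioi fun t _ => ?_
  simp [abs_of_pos (Real.exp_pos _)]

private lemma integrable_of_bounded_exp {f : ℝ → ℝ} {s : ℝ} (hs : 0 < s) (C : ℝ)
    (hcont : Continuous f) (hb : ∀ t, |f t| ≤ C * Real.exp (-s * t)) :
    IntegrableOn f (Set.Ioi (0:ℝ)) := by
  have base : IntegrableOn (fun t => Real.exp (-s * t)) (Set.Ioi (0:ℝ)) :=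
    exp_neg_integrableOn_Ioi 0 hs
  exact (base.const_mul C).mono' hcont.aestronglyMeasurable.restrict
    (ae_of_all _ fun t => by simpa [Real.norm_eq_abs] using hb t)

theorem xi0_laplace_representations (s : ℝ) (hs : 0 < s) :
    ξ₀ s = ∫ t in Set.Ioi (0:ℝ), (2 * Real.exp (-t) / (1 + Real.exp (-t)) ^ 2) * Real.exp (-s * t) ∧
    1 - ξ₀ s = s * ∫ t in Set.Ioi (0:ℝ), (2 * Real.exp (-t) / (1 + Real.exp (-t))) * Real.exp (-s * t) ∧
    ξ₀' s = -∫ t in Set.Ioi (0:ℝ), (2 * t * Real.exp (-t) / (1 + Real.exp (-t)) ^ 2) * Real.exp (-s * t) := by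
  have hce : Continuous fun t : ℝ => Real.exp (-t) := Real.continuous_exp.comp continuous_neg
  have hcs : Continuous fun t : ℝ => Real.exp (-s * t) :=
    Real.continuous_exp.comp (continuous_const.mul continuous_id)
  -- integrability of the three kernels plus the pure exponential
  have hI1 : IntegrableOn
      (fun t => 2 * Real.exp (-t) / (1 + Real.exp (-t)) ^ 2 * Real.exp (-s * t))
      (Set.Ioi (0:ℝ)) := by
    refine integrable_of_bounded_exp hs 2
      (((continuous_const.mul hce).div ((continuous_const.add hce).pow 2)
        (fun t => (by positivity : (1 + Real.exp (-t)) ^ 2 ≠ 0))).mul hcs) (fun t => ?_)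
    rw [abs_of_nonneg (by positivity)]
    have key : 2 * Real.exp (-t) / (1 + Real.exp (-t)) ^ 2 ≤ 2 := by
      rw [div_le_iff₀ (by positivity)]
      nlinarith [Real.exp_pos (-t), sq_nonneg (Real.exp (-t))]
    exact mul_le_mul_of_nonneg_right key (Real.exp_pos _).le
  have hI2 : IntegrableOn
      (fun t => 2 * Real.exp (-t) / (1 + Real.exp (-t)) * Real.exp (-s * t))
      (Set.Ioi (0:ℝ)) := by
    refine integrable_of_bounded_exp hs 2
      (((continuous_const.mul hce).div (continuous_const.add hce)
        (fun t => (by positivity : (1 + Real.exp (-t)) ≠ 0))).mul hcs) (fun t => ?_)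
    rw [abs_of_nonneg (by positivity)]
    have key : 2 * Real.exp (-t) / (1 + Real.exp (-t)) ≤ 2 := by
      rw [div_le_iff₀ (by positivity)]
      nlinarith [Real.exp_pos (-t)]
    exact mul_le_mul_of_nonneg_right key (Real.exp_pos _).le
  have hI3 : IntegrableOn
      (fun t => (1 - Real.exp (-t)) / (1 + Real.exp (-t)) * Real.exp (-s * t))
      (Set.Ioi (0:ℝ)) := by
    refine integrable_of_bounded_exp hs 1
      (((continuous_const.sub hce).div (continuous_const.add hce)
        (fun t => (by positivity : (1 + Real.exp (-t)) ≠ 0))).mul hcs) (fun t => ?_)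
    rw [abs_mul, abs_of_pos (Real.exp_pos _), one_mul]
    have key : |(1 - Real.exp (-t)) / (1 + Real.exp (-t))| ≤ 1 := by
      rw [abs_div, abs_of_pos (show (0:ℝ) < 1 + Real.exp (-t) by positivity),
        div_le_one (by positivity)]
      exact abs_le.mpr ⟨by nlinarith [Real.exp_pos (-t)], by nlinarith [Real.exp_pos (-t)]⟩
    calc |(1 - Real.exp (-t)) / (1 + Real.exp (-t))| * Real.exp (-s * t)
        ≤ 1 * Real.exp (-s * t) := mul_le_mul_of_nonneg_right key (Real.exp_pos _).le
      _ = Real.exp (-s * t) := one_mul _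
  have hIexp : IntegrableOn (fun t => Real.exp (-s * t)) (Set.Ioi (0:ℝ)) :=
    exp_neg_integrableOn_Ioi 0 hs
  -- ξ₀ in t-coordinates
  have hxi : ξ₀ s = s * ∫ t in Set.Ioi (0:ℝ),
      (1 - Real.exp (-t)) / (1 + Real.exp (-t)) * Real.exp (-s * t) := by
    rw [ξ₀, intervalIntegral.integral_of_le zero_le_one, integral_Ioc_eq_integral_Ioo,
      integral_Ioo_eq_exp_neg, ← integral_const_mul]
    refine setIntegral_congr_fun measurableSet_Ioi fun t _ => ?_
    have key : Real.exp (-t) * Real.exp (-t) ^ (s - 1) = Real.exp (-s * t) := by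
      rw [Real.rpow_def_of_pos (Real.exp_pos _), Real.log_exp, ← Real.exp_add]
      ring_nf
    calc Real.exp (-t) * ((1 - Real.exp (-t)) / (1 + Real.exp (-t)) * (s * Real.exp (-t) ^ (s - 1)))
        = s * ((1 - Real.exp (-t)) / (1 + Real.exp (-t))
            * (Real.exp (-t) * Real.exp (-t) ^ (s - 1))) := by ring
      _ = _ := by rw [key]
  -- limits
  have hst : Tendsto (fun t : ℝ => s * t) atTop atTop := tendsto_id.const_mul_atTop hs
  have h2 : Tendsto (fun t : ℝ => Real.exp (-s * t)) atTop (nhds 0) := by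
    have h := Real.tendsto_exp_neg_atTop_nhds_zero.comp hst
    refine h.congr fun t => ?_
    simp [Function.comp, neg_mul]
  have he0 : Tendsto (fun t : ℝ => Real.exp (-t)) atTop (nhds 0) :=
    Real.tendsto_exp_neg_atTop_nhds_zero
  -- integration by parts identity: ∫ f1 = s ∫ g3
  have hparts : (∫ t in Set.Ioi (0:ℝ),
      2 * Real.exp (-t) / (1 + Real.exp (-t)) ^ 2 * Real.exp (-s * t))
      = s * ∫ t in Set.Ioi (0:ℝ),
        (1 - Real.exp (-t)) / (1 + Real.exp (-t)) * Real.exp (-s * t) := by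
    have hF : ∀ t : ℝ, HasDerivAt
        (fun t => (1 - Real.exp (-t)) / (1 + Real.exp (-t)) * Real.exp (-s * t))
        (2 * Real.exp (-t) / (1 + Real.exp (-t)) ^ 2 * Real.exp (-s * t)
          - s * ((1 - Real.exp (-t)) / (1 + Real.exp (-t)) * Real.exp (-s * t))) t := by
      intro t
      have hne : (1 + Real.exp (-t)) ≠ 0 := by positivity
      have h1 := (((hasDerivAt_const t (1:ℝ)).sub (exp_neg_hasDerivAt t)).div
        ((hasDerivAt_const t (1:ℝ)).add (exp_neg_hasDerivAt t)) hne).mul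
        (exp_neg_mul_hasDerivAt s t)
      refine h1.congr_deriv ?_
      simp only [Pi.add_apply, Pi.sub_apply, Pi.div_apply]
      field_simp
      ring
    have hFint : IntegrableOn (fun t =>
        2 * Real.exp (-t) / (1 + Real.exp (-t)) ^ 2 * Real.exp (-s * t)
          - s * ((1 - Real.exp (-t)) / (1 + Real.exp (-t)) * Real.exp (-s * t)))
        (Set.Ioi (0:ℝ)) := hI1.sub (hI3.const_mul s)
    have htend : Tendsto
        (fun t => (1 - Real.exp (-t)) / (1 + Real.exp (-t)) * Real.exp (-s * t))
        atTop (nhds 0) := by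
      have h1 : Tendsto (fun t : ℝ => (1 - Real.exp (-t)) / (1 + Real.exp (-t)))
          atTop (nhds 1) := by
        have h : Tendsto (fun t : ℝ => (1 - Real.exp (-t)) / (1 + Real.exp (-t)))
            atTop (nhds ((1:ℝ)/1)) :=
          Tendsto.div (by simpa using tendsto_const_nhds.sub he0)
            (by simpa using tendsto_const_nhds.add he0) one_ne_zero
        simpa using h
      simpa using h1.mul h2
    have hI := integral_Ioi_of_hasDerivAt_of_tendsto' (fun t _ => hF t) hFint htend
    rw [integral_sub hI1 (hI3.const_mul s), integral_const_mul] at hI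
    simp only [neg_zero, Real.exp_zero, sub_self, zero_div, zero_mul, mul_zero,
      sub_zero, zero_sub] at hI
    linarith
  -- value of the pure Laplace integral
  have hT0 : (∫ t in Set.Ioi (0:ℝ), Real.exp (-s * t)) = 1 / s := by
    have hF : ∀ t : ℝ, HasDerivAt (fun t => -Real.exp (-s * t) / s)
        (Real.exp (-s * t)) t := by
      intro t
      have := ((exp_neg_mul_hasDerivAt s t).neg).div_const s
      refine this.congr_deriv ?_
      field_simp
    have htend : Tendsto (fun t => -Real.exp (-s * t) / s) atTop (nhds 0) := by
      simpa using (h2.neg).div_const s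
    have hI := integral_Ioi_of_hasDerivAt_of_tendsto' (fun t _ => hF t) hIexp htend
    rw [hI]
    simp [div_eq_mul_inv]
  -- split g3 = exp − f2
  have hsplit : (∫ t in Set.Ioi (0:ℝ),
      (1 - Real.exp (-t)) / (1 + Real.exp (-t)) * Real.exp (-s * t))
      = 1 / s - ∫ t in Set.Ioi (0:ℝ),
          2 * Real.exp (-t) / (1 + Real.exp (-t)) * Real.exp (-s * t) := by
    rw [← hT0, ← integral_sub hIexp hI2]
    refine setIntegral_congr_fun measurableSet_Ioi fun t _ => ?_
    have hne : (1 + Real.exp (-t)) ≠ 0 := by positivity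
    field_simp
    ring
  refine ⟨by rw [hxi, hparts], ?_, ?_⟩
  · rw [hxi, hsplit]
    field_simp
    ring
  · -- third representation: pure substitution
    rw [ξ₀', intervalIntegral.integral_of_le zero_le_one, integral_Ioc_eq_integral_Ioo,
      integral_Ioo_eq_exp_neg, ← integral_neg]
    refine setIntegral_congr_fun measurableSet_Ioi fun t _ => ?_
    have key : Real.exp (-t) ^ s = Real.exp (-s * t) := by
      rw [Real.rpow_def_of_pos (Real.exp_pos _), Real.log_exp]
      ring_nf
    rw [Real.log_exp, key]
    ring
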